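/- Let N ≥ 2 be an integer and let R̃_{n,N} ∈ (0, 1/2) be the minimum positive root of (1+x)(1−2x)(1−x)^{N−1} − 2x^N = 0. For every real ρ with R̃_{n,N} < ρ < 1/2 there exists a ∈ [0,1) with aρ < 1/2 such that (a−ρ)/(1−aρ) + (1−a²)·a^{N−1}ρ^N/((1−aρ)^N(1−2aρ)) > 1. Consequently, the radius R̃_{n,N} in the first part of the multidimensional Bohr inequality for higher partial derivatives is best possible: this quantity is the value of |f(z)| + Σ_{k=N}^∞ Σ_{|α|=k} (1/α!)|∂^{|α|}f(z)/∂z^α||z|^α for the function f(z) = (a − (z_1+…+z_n))/(1 − a(z_1+…+z_n)) at z = (−r,…,−r) with nr = ρ. -/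

import Mathlib

open Finset

/-- **Sharpness of the radius `R̃_{n,N}` in the Bohr inequality for higher partial
derivatives.** For every `ρ` with `R̃_{n,N} < ρ < 1/2` there is `a ∈ [0,1)` with
`aρ < 1/2` such that
`(a-ρ)/(1-aρ) + (1-a²)a^{N-1}ρ^N/((1-aρ)^N(1-2aρ)) > 1`;
this quantity is the value of the Bohr sum for
`f(z) = (a - (z₁+⋯+z_n))/(1 - a(z₁+⋯+z_n))` at `z = (-r,…,-r)` with `nr = ρ`. -/
theorem bohr_polydisk_partials_first_sharp
    (N : ℕ) (hN : 2 ≤ N)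
    (R : ℝ) (hR0 : 0 < R) (hR12 : R < 1 / 2)
    (hroot : (1 + R) * (1 - 2 * R) * (1 - R) ^ (N - 1) - 2 * R ^ N = 0)
    (hmin : ∀ x : ℝ, 0 < x →
      (1 + x) * (1 - 2 * x) * (1 - x) ^ (N - 1) - 2 * x ^ N = 0 → R ≤ x) :
    ∀ ρ : ℝ, R < ρ → ρ < 1 / 2 →
      ∃ a : ℝ, 0 ≤ a ∧ a < 1 ∧ a * ρ < 1 / 2 ∧
        (a - ρ) / (1 - a * ρ)
          + (1 - a ^ 2) * a ^ (N - 1) * ρ ^ N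
              / ((1 - a * ρ) ^ N * (1 - 2 * a * ρ)) > 1 := by
  intro ρ hRρ hρ12
  obtain ⟨M, rfl⟩ : ∃ M, N = M + 1 := ⟨N - 1, (Nat.succ_pred_eq_of_pos (by omega)).symm⟩
  have hM : 1 ≤ M := by omega
  simp only [Nat.add_sub_cancel] at hroot ⊢
  have hρ0 : 0 < ρ := lt_trans hR0 hRρ
  -- Step 1: G(ρ) < 0, i.e. P(1) > 0
  have hRρ1 : 1 - ρ < 1 - R := by linarith
  have hρ1pos : 0 < 1 - ρ := by linarith
  have hpowlt : (1 - ρ) ^ M < (1 - R) ^ M :=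
    pow_lt_pow_left₀ hRρ1 (le_of_lt hρ1pos) (by omega)
  have hRpowlt : R ^ (M + 1) < ρ ^ (M + 1) :=
    pow_lt_pow_left₀ hRρ (le_of_lt hR0) (by omega)
  have hABpos : 0 < (1 + ρ) * (1 - 2 * ρ) := by nlinarith
  have hAB : (1 + ρ) * (1 - 2 * ρ) < (1 + R) * (1 - 2 * R) := by nlinarith
  have hBpos : 0 < (1 + R) * (1 - 2 * R) := lt_trans hABpos hAB
  have hGρ : (1 + ρ) * (1 - 2 * ρ) * (1 - ρ) ^ M < 2 * ρ ^ (M + 1) := by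
    have h1 : (1 + ρ) * (1 - 2 * ρ) * (1 - ρ) ^ M
        < (1 + R) * (1 - 2 * R) * (1 - ρ) ^ M :=
      mul_lt_mul_of_pos_right hAB (pow_pos hρ1pos M)
    have h2 : (1 + R) * (1 - 2 * R) * (1 - ρ) ^ M
        < (1 + R) * (1 - 2 * R) * (1 - R) ^ M :=
      mul_lt_mul_of_pos_left hpowlt hBpos
    have h3 : (1 + R) * (1 - 2 * R) * (1 - R) ^ M = 2 * R ^ (M + 1) := by linarith
    nlinarith
  -- Step 2: continuity argument to pick `a < 1` close to `1`
  set P : ℝ → ℝ := fun a =>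
    (1 + a) * a ^ M * ρ ^ (M + 1) - (1 + ρ) * (1 - a * ρ) ^ M * (1 - 2 * a * ρ) with hP
  have hPc : Continuous P := by fun_prop
  have hP1 : 0 < P 1 := by
    simp only [hP, one_pow, one_mul, mul_one]
    nlinarith [hGρ]
  have h1 : ∀ᶠ a in nhds (1 : ℝ), 0 < P a :=
    hPc.continuousAt (Ioi_mem_nhds hP1)
  have h2 : ∀ᶠ a in nhds (1 : ℝ), a * ρ < 1 / 2 := by
    have : ContinuousAt (fun a : ℝ => a * ρ) 1 := by fun_prop
    have := this (Iio_mem_nhds (show (1 : ℝ) * ρ < 1 / 2 by linarith))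
    exact this
  have h3 : ∀ᶠ a in nhds (1 : ℝ), 0 < a := eventually_gt_nhds one_pos
  have hall : ∀ᶠ a in nhdsWithin (1 : ℝ) (Set.Iio 1),
      (0 < P a ∧ a * ρ < 1 / 2 ∧ 0 < a) ∧ a < 1 := by
    refine Filter.Eventually.and ?_ ?_
    · exact eventually_nhdsWithin_of_eventually_nhds (by filter_upwards [h1, h2, h3] with a ha hb hc; exact ⟨ha, hb, hc⟩)
    · exact eventually_mem_nhdsWithin
  obtain ⟨a, ⟨hPa, haρ, ha0⟩, ha1⟩ := hall.exists
  refine ⟨a, le_of_lt ha0, ha1, haρ, ?_⟩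
  -- Step 3: algebraic identity and positivity
  have hD : 0 < 1 - a * ρ := by linarith
  have hT : 0 < 1 - 2 * a * ρ := by linarith
  have hDN : 0 < (1 - a * ρ) ^ (M + 1) := pow_pos hD _
  have key : (a - ρ) / (1 - a * ρ)
      + (1 - a ^ 2) * a ^ M * ρ ^ (M + 1)
          / ((1 - a * ρ) ^ (M + 1) * (1 - 2 * a * ρ)) - 1
      = (1 - a) * P a / ((1 - a * ρ) ^ (M + 1) * (1 - 2 * a * ρ)) := by
    rw [hP]
    rw [div_add_div _ _ hD.ne' (mul_pos hDN hT).ne', div_sub_one (mul_pos hD (mul_pos hDN hT)).ne',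
      div_eq_div_iff (mul_pos hD (mul_pos hDN hT)).ne' (mul_pos hDN hT).ne']
    ring
  have hpos : 0 < (1 - a) * P a / ((1 - a * ρ) ^ (M + 1) * (1 - 2 * a * ρ)) :=
    div_pos (mul_pos (by linarith) hPa) (mul_pos hDN hT)
  linarith [key ▸ hpos]
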